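/- On a W̄₃-manifold (M,P,g) of dimension 2n, with A(y,z) = (∇_y θ)z - (1/2n)θ(y)θ(z), the following are equivalent: (i) θ is closed; (ii) A(y,z) = A(z,y) for all y,z; (iii) A(y,Pz) = A(z,Py) and A(Py,Pz) = A(y,z) for all y,z. -/

import Mathlib

open scoped BigOperators

/-- An abstract (local) model of a Riemannian almost product manifold of
dimension `n`: `V` plays the role of the module of smooth vector fields over
the commutative ℝ-algebra `C` of smooth functions, `g` is the Riemannian
metric, `P` the almost product structure, `D` the directional derivative of
functions, `bracket` the Lie bracket of vector fields, `nabla` the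
Levi-Civita connection of `g`, and `e`, `e'` a frame together with its
`g`-reciprocal frame (used to form traces `g^{ij}·`). -/
structure RAPM (n : ℕ) where
  V : Type
  C : Type
  [instAG : AddCommGroup V]
  [instCR : CommRing C]
  [instAlg : Algebra ℝ C]
  [instMod : Module C V]
  g : V →ₗ[C] V →ₗ[C] C
  P : V →ₗ[C] V
  gSymm : ∀ x y, g x y = g y x
  Pinvol : ∀ x, P (P x) = x
  Piso : ∀ x y, g (P x) (P y) = g x y
  D : V → C → C
  Dadd : ∀ x f h, D x (f + h) = D x f + D x h
  bracket : V → V → V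
  bracketD : ∀ x y f, D (bracket x y) f = D x (D y f) - D y (D x f)
  jacobi : ∀ x y z,
    bracket x (bracket y z) + bracket y (bracket z x) + bracket z (bracket x y) = 0
  nabla : V → V → V
  nabla_add₁ : ∀ x y z, nabla (x + y) z = nabla x z + nabla y z
  nabla_smul₁ : ∀ (f : C) x y, nabla (f • x) y = f • nabla x y
  nabla_add₂ : ∀ x y z, nabla x (y + z) = nabla x y + nabla x z
  nabla_leibniz : ∀ x (f : C) y, nabla x (f • y) = D x f • y + f • nabla x y
  nabla_metric : ∀ x y z, D x (g y z) = g (nabla x y) z + g y (nabla x z)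
  torsion_free : ∀ x y, nabla x y - nabla y x = bracket x y
  e : Fin n → V
  e' : Fin n → V
  dual_frame : ∀ i j, g (e' i) (e j) = if i = j then 1 else 0
  frame_span : ∀ v : V, v = ∑ i, g (e' i) v • e i

namespace RAPM

attribute [instance] RAPM.instAG RAPM.instCR RAPM.instAlg RAPM.instMod

variable {n : ℕ} (Q : RAPM n)

/-- The fundamental tensor `F(x,y,z) = g((∇ₓP)y, z)`. -/
def F (x y z : Q.V) : Q.C := Q.g (Q.nabla x (Q.P y) - Q.P (Q.nabla x y)) z

/-- The curvature operator `R(x,y)z`. -/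
def R (x y z : Q.V) : Q.V :=
  Q.nabla x (Q.nabla y z) - Q.nabla y (Q.nabla x z) - Q.nabla (Q.bracket x y) z

/-- The (0,4) curvature tensor `R(x,y,z,w) = g(R(x,y)z, w)`. -/
def Rm (x y z w : Q.V) : Q.C := Q.g (Q.R x y z) w

/-- `tr P = g^{ij} g(e_i, P e_j)`. -/
def trP : Q.C := ∑ i, Q.g (Q.e' i) (Q.P (Q.e i))

/-- The Lee form `θ(x) = g^{ij} F(e_i, e_j, x)`. -/
def theta (x : Q.V) : Q.C := ∑ i, Q.F (Q.e' i) (Q.e i) x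

/-- The covariant derivative `(∇ₓθ)y`. -/
def nablaTheta (x y : Q.V) : Q.C := Q.D x (Q.theta y) - Q.theta (Q.nabla x y)

/-- `θ` is closed iff `(∇ₓθ)y = (∇_yθ)x`. -/
def closed : Prop := ∀ x y, Q.nablaTheta x y = Q.nablaTheta y x

/-- The covariant derivative `(∇ₓF)(y,z,w)`. -/
def nablaF (x y z w : Q.V) : Q.C :=
  Q.D x (Q.F y z w) - Q.F (Q.nabla x y) z w - Q.F y (Q.nabla x z) w
    - Q.F y z (Q.nabla x w)

def psi1 (S : Q.V → Q.V → Q.C) (x y z w : Q.V) : Q.C :=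
  Q.g y z * S x w - Q.g x z * S y w + S y z * Q.g x w - S x z * Q.g y w

def psi2 (S : Q.V → Q.V → Q.C) (x y z w : Q.V) : Q.C :=
  Q.psi1 S x y (Q.P z) (Q.P w)

/-- The associated metric `g̃(x,y) = g(x,Py)`. -/
def gP (x y : Q.V) : Q.C := Q.g x (Q.P y)

noncomputable def pi1 (x y z w : Q.V) : Q.C :=
  ((1 : ℝ)/2) • Q.psi1 (fun a b => Q.g a b) x y z w

noncomputable def pi2 (x y z w : Q.V) : Q.C :=
  ((1 : ℝ)/2) • Q.psi2 (fun a b => Q.g a b) x y z w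

def pi3 (x y z w : Q.V) : Q.C := Q.psi1 Q.gP x y z w

/-- The Ricci tensor `ρ(L)(y,z) = g^{ij} L(e_i,y,z,e_j)` of a (0,4)-tensor. -/
def ric (L : Q.V → Q.V → Q.V → Q.V → Q.C) (y z : Q.V) : Q.C :=
  ∑ i, L (Q.e' i) y z (Q.e i)

/-- The scalar curvature `τ(L) = g^{ij} ρ(L)(e_i,e_j)`. -/
def scal (L : Q.V → Q.V → Q.V → Q.V → Q.C) : Q.C := ∑ i, Q.ric L (Q.e i) (Q.e' i)

/-- The associated Ricci tensor `ρ*(L)(y,z) = g^{ij} L(e_i,y,z,Pe_j)`. -/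
def ricStar (L : Q.V → Q.V → Q.V → Q.V → Q.C) (y z : Q.V) : Q.C :=
  ∑ i, L (Q.e' i) y z (Q.P (Q.e i))

/-- The associated scalar curvature `τ*(L)`. -/
def scalStar (L : Q.V → Q.V → Q.V → Q.V → Q.C) : Q.C :=
  ∑ i, Q.ricStar L (Q.e i) (Q.e' i)

/-- The trace `g^{ij} S(e_i,e_j)` of a (0,2)-tensor. -/
def trB (S : Q.V → Q.V → Q.C) : Q.C := ∑ i, S (Q.e i) (Q.e' i)

/-- The divergence of a vector field. -/
def divg (v : Q.V) : Q.C := ∑ i, Q.g (Q.e' i) (Q.nabla (Q.e i) v)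

/-- A curvature-like tensor. -/
def curvatureLike (L : Q.V → Q.V → Q.V → Q.V → Q.C) : Prop :=
  (∀ x y z w, L x y z w = - L y x z w) ∧
  (∀ x y z w, L x y z w = - L x y w z) ∧
  (∀ x y z w, L x y z w + L y z x w + L z x y w = 0)

/-- A Riemannian P-tensor. -/
def isPtensor (L : Q.V → Q.V → Q.V → Q.V → Q.C) : Prop :=
  Q.curvatureLike L ∧ ∀ x y z w, L x y (Q.P z) (Q.P w) = L x y z w

/-- The defining condition of the Naveira class `W̄₃` (dimension `n`, so the
factor `1/(2n)` of the paper is `1/n` here). -/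
def W3 : Prop :=
  (∀ x y z, Q.F x y z =
    ((1 : ℝ)/(n : ℝ)) • ((Q.g x y + Q.g x (Q.P y)) * Q.theta z +
      (Q.g x z + Q.g x (Q.P z)) * Q.theta y)) ∧
  (∀ x, Q.theta (Q.P x) = - Q.theta x)

/-- The defining condition of the Naveira class `W̄₆`. -/
def W6 : Prop :=
  (∀ x y z, Q.F x y z =
    ((1 : ℝ)/(n : ℝ)) • ((Q.g x y - Q.g x (Q.P y)) * Q.theta z +
      (Q.g x z - Q.g x (Q.P z)) * Q.theta y)) ∧
  (∀ x, Q.theta (Q.P x) = Q.theta x)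

end RAPM

open RAPM in
/-- On a `W̄₃`-manifold, with `A(y,z) = (∇_yθ)z - (1/2n)θ(y)θ(z)`, the
closedness of `θ` is equivalent to the symmetry of `A` and to the two
`P`-symmetry conditions on `A`. -/
theorem statement8 {n : ℕ} (hn : 0 < n) (Q : RAPM (2*n)) (htr : Q.trP = 0)
    (hW : Q.W3)
    (A : Q.V → Q.V → Q.C)
    (hA : ∀ y z, A y z =
      Q.nablaTheta y z - ((1 : ℝ)/(2*(n : ℝ))) • (Q.theta y * Q.theta z)) :
    (Q.closed ↔ ∀ y z, A y z = A z y) ∧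
    (Q.closed ↔ ((∀ y z, A y (Q.P z) = A z (Q.P y)) ∧
      (∀ y z, A (Q.P y) (Q.P z) = A y z))) := by

  classical
  obtain ⟨hF, hPθ⟩ := hW
  have gPsym : ∀ x z : Q.V, Q.g x (Q.P z) = Q.g z (Q.P x) := by
    intro x z
    rw [← Q.Piso x (Q.P z), Q.Pinvol, Q.gSymm]
  set T : Q.V :=
    ∑ i, (Q.nabla (Q.e' i) (Q.P (Q.e i)) - Q.P (Q.nabla (Q.e' i) (Q.e i))) with hT
  have hθ : ∀ x, Q.theta x = Q.g T x := by
    intro x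
    rw [hT, map_sum, LinearMap.sum_apply]
    rfl
  have hD0 : ∀ x : Q.V, Q.D x 0 = 0 := by
    intro x
    have h := Q.Dadd x 0 0
    simp only [add_zero] at h
    exact right_eq_add.mp h
  have hDneg : ∀ (x : Q.V) (f : Q.C), Q.D x (-f) = - Q.D x f := by
    intro x f
    have h := Q.Dadd x f (-f)
    rw [add_neg_cancel, hD0] at h
    linear_combination h.symm
  set κ : Q.C := algebraMap ℝ Q.C ((1 : ℝ)/(2*(n : ℝ))) with hκ
  have hsmul : ∀ x : Q.C, ((1 : ℝ)/(2*(n : ℝ))) • x = κ * x := by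
    intro x; rw [hκ, Algebra.smul_def]
  have hF' : ∀ x y z, Q.F x y z =
      κ * ((Q.g x y + Q.g x (Q.P y)) * Q.theta z +
        (Q.g x z + Q.g x (Q.P z)) * Q.theta y) := by
    intro x y z
    rw [hF x y z, ← hsmul]
    congr 1
    push_cast
    ring
  have hA' : ∀ y z, A y z = Q.nablaTheta y z - κ * (Q.theta y * Q.theta z) := by
    intro y z; rw [hA, hsmul]
  -- theta applied to (∇ₓP)z
  have hθP : ∀ x z, Q.theta (Q.nabla x (Q.P z) - Q.P (Q.nabla x z)) =
      κ * ((Q.g x z + Q.g x (Q.P z)) * Q.g T T) := by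
    intro x z
    have h1 : Q.theta (Q.nabla x (Q.P z) - Q.P (Q.nabla x z)) = Q.F x z T := by
      rw [hθ, F, Q.gSymm]
    rw [h1, hF' x z T]
    have h2 : Q.g x T = Q.theta x := by rw [Q.gSymm, ← hθ]
    have h3 : Q.g x (Q.P T) = - Q.theta x := by
      rw [gPsym, ← hθ, hPθ]
    rw [h2, h3, ← hθ T]
    have h4 : Q.theta T = Q.g T T := hθ T
    rw [h4]
    ring
  -- the key star identity on nablaTheta
  have hN : ∀ x z, Q.nablaTheta x (Q.P z) =
      - Q.nablaTheta x z - κ * ((Q.g x z + Q.g x (Q.P z)) * Q.g T T) := by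
    intro x z
    have hsplit : Q.theta (Q.nabla x (Q.P z)) =
        Q.theta (Q.nabla x (Q.P z) - Q.P (Q.nabla x z)) +
          Q.theta (Q.P (Q.nabla x z)) := by
      rw [hθ, hθ, hθ, ← map_add]
      congr 1
      abel
    have h5 := hθP x z
    have h6 := hPθ (Q.nabla x z)
    simp only [nablaTheta]
    rw [hPθ z, hDneg, hsplit, h5, h6]
    ring
  -- star identity for A
  have hAstar : ∀ y z, A y (Q.P z) =
      - A y z - κ * ((Q.g y z + Q.g y (Q.P z)) * Q.g T T) := by
    intro y z
    rw [hA', hA', hN y z, hPθ z]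
    ring
  -- first equivalence
  have hiff1 : Q.closed ↔ ∀ y z, A y z = A z y := by
    constructor
    · intro h y z
      have := h y z
      rw [hA', hA']
      linear_combination this
    · intro h x y
      have := h x y
      rw [hA' x y, hA' y x] at this
      linear_combination this
  refine ⟨hiff1, ?_⟩
  constructor
  · intro hcl
    have hsym : ∀ y z, A y z = A z y := hiff1.mp hcl
    constructor
    · intro y z
      rw [hAstar y z, hAstar z y]
      have h2 : Q.g y z = Q.g z y := Q.gSymm y z
      have h3 : Q.g y (Q.P z) = Q.g z (Q.P y) := gPsym y z
      linear_combination (-1 : Q.C) * hsym y z - κ * Q.g T T * h2 - κ * Q.g T T * h3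
    · intro y z
      rw [hAstar (Q.P y) z]
      have h4 : A (Q.P y) z = A z (Q.P y) := hsym _ _
      rw [h4, hAstar z y]
      have h5 : Q.g (Q.P y) z = Q.g z (Q.P y) := Q.gSymm _ _
      have h6 : Q.g (Q.P y) (Q.P z) = Q.g z y := by rw [Q.Piso, Q.gSymm]
      have h7 : A z y = A y z := hsym _ _
      linear_combination h7 - κ * Q.g T T * h5 - κ * Q.g T T * h6
  · rintro ⟨ha, hb⟩
    apply hiff1.mpr
    intro y z
    have h := ha y z
    rw [hAstar y z, hAstar z y] at h
    have h2 : Q.g y z = Q.g z y := Q.gSymm y z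
    have h3 : Q.g y (Q.P z) = Q.g z (Q.P y) := gPsym y z
    linear_combination (-1 : Q.C) * h - κ * Q.g T T * h2 - κ * Q.g T T * h3
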